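/- Let n ≥ 4 and let λ_1 ≥ … ≥ λ_{n−1} ≥ |λ_n| be real numbers with λ_i ∈ ½ + ℤ for all 1 ≤ i ≤ n. Then the tweaked Gelfand–Tsetlin polytope tGT(λ) has a vertex (extreme point) at least one of whose coordinates equals 0; in particular, tGT(λ) has a vertex not all of whose coordinates lie in ½ + ℤ. -/

import Mathlib

/-- Index set for the `y`-entries: pairs `(i, j)` with `2 ≤ i ≤ j ≤ n`. -/
abbrev DYIdx (n : ℕ) := {p : ℕ × ℕ // 2 ≤ p.1 ∧ p.1 ≤ p.2 ∧ p.2 ≤ n}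

/-- Index set for the `z`-entries with `1 ≤ i ≤ j ≤ n − 2`. -/
abbrev DZIdx (n : ℕ) := {p : ℕ × ℕ // 1 ≤ p.1 ∧ p.1 ≤ p.2 ∧ p.2 ≤ n - 2}

/-- Index set for the `z↑`- and `z↓`-entries: `1 ≤ i ≤ n − 2`. -/
abbrev DUIdx (n : ℕ) := {i : ℕ // 1 ≤ i ∧ i ≤ n - 2}

/-- The ambient space `ℝ^{n²−2}` of tweaked Gelfand–Tsetlin patterns: coordinates
`y_{i,j}` (for `2 ≤ i ≤ j ≤ n`), `z_{i,j}` (for `1 ≤ i ≤ j ≤ n−2`), `z↑_{i,n−1}` and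
`z↓_{i,n−1}` (for `1 ≤ i ≤ n−2`), and `z_{n−1,n−1}`. -/
abbrev TPt (n : ℕ) := (DYIdx n → ℝ) × (DZIdx n → ℝ) × (DUIdx n → ℝ) × (DUIdx n → ℝ) × ℝ

/-- The `y_{i,j}` coordinate, with the convention `y_{1,j} = λ_j`
(`0` for out-of-range indices). -/
def tY (n : ℕ) (lam : ℕ → ℝ) (w : TPt n) (i j : ℕ) : ℝ :=
  if i = 1 ∧ 1 ≤ j ∧ j ≤ n then lam j
  else if h : 2 ≤ i ∧ i ≤ j ∧ j ≤ n then w.1 ⟨(i, j), h⟩ else 0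

/-- The `z_{i,j}` coordinate, `1 ≤ i ≤ j ≤ n−2` (`0` for out-of-range indices). -/
def tZ (n : ℕ) (w : TPt n) (i j : ℕ) : ℝ :=
  if h : 1 ≤ i ∧ i ≤ j ∧ j ≤ n - 2 then w.2.1 ⟨(i, j), h⟩ else 0

/-- The `z↑_{i,n−1}` coordinate (`0` for out-of-range indices). -/
def tU (n : ℕ) (w : TPt n) (i : ℕ) : ℝ :=
  if h : 1 ≤ i ∧ i ≤ n - 2 then w.2.2.1 ⟨i, h⟩ else 0

/-- The `z↓_{i,n−1}` coordinate (`0` for out-of-range indices). -/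
def tD (n : ℕ) (w : TPt n) (i : ℕ) : ℝ :=
  if h : 1 ≤ i ∧ i ≤ n - 2 then w.2.2.2.1 ⟨i, h⟩ else 0

/-- The `z_{n−1,n−1}` coordinate. -/
def tL (n : ℕ) (w : TPt n) : ℝ := w.2.2.2.2

/-- The affine subspace `V_λ ⊆ ℝ^{n²−2}` defined by
`z↑_{i,n−1} − z↓_{i,n−1} = y_{i,n−1} − y_{i+1,n−1}` for `1 ≤ i ≤ n−2`. -/
def Vlam (n : ℕ) (lam : ℕ → ℝ) : Set (TPt n) :=
  {w | ∀ i, 1 ≤ i → i ≤ n - 2 →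
    tU n w i - tD n w i = tY n lam w i (n - 1) - tY n lam w (i + 1) (n - 1)}

/-- The tweaked Gelfand–Tsetlin polytope `tGT(λ)` in type `Dₙ`. -/
def tGT (n : ℕ) (lam : ℕ → ℝ) : Set (TPt n) :=
  {w | w ∈ Vlam n lam ∧
    (∀ i j, 1 ≤ i → i ≤ n - 2 → i ≤ j → j ≤ n - 2 →
      tY n lam w i j ≥ tZ n w i j ∧ tZ n w i j ≥ tY n lam w i (j + 1)) ∧
    (∀ i j, 1 ≤ i → i ≤ n - 2 → i + 1 ≤ j → j ≤ n - 2 →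
      tZ n w i (j - 1) ≥ tY n lam w (i + 1) j ∧ tY n lam w (i + 1) j ≥ tZ n w i j) ∧
    (∀ i, 1 ≤ i → i ≤ n - 2 → tZ n w i (n - 2) ≥ tY n lam w (i + 1) (n - 1)) ∧
    (∀ i, 1 ≤ i → i ≤ n - 2 →
      tY n lam w i (n - 1) ≥ tU n w i ∧
      tU n w i ≥ max (tY n lam w i n) (tY n lam w (i + 1) n) ∧
      tU n w i ≤ tY n lam w i (n - 1) + tY n lam w i n + tY n lam w (i + 1) n ∧
      tY n lam w (i + 1) (n - 1) ≥ tD n w i ∧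
      tD n w i ≥ max (tY n lam w i n) (tY n lam w (i + 1) n) ∧
      tD n w i ≤ tY n lam w (i + 1) (n - 1) + tY n lam w i n + tY n lam w (i + 1) n) ∧
    (tY n lam w (n - 1) (n - 1) ≥ tL n w ∧
      tL n w ≥ max (tY n lam w (n - 1) n) (tY n lam w n n) ∧
      tL n w ≤ tY n lam w (n - 1) (n - 1) + tY n lam w (n - 1) n + tY n lam w n n)}

/-! ### Auxiliary material -/

noncomputable def tM (m : ℕ) (lam : ℕ → ℝ) : ℝ :=
  min (lam (m+1)) (lam (m+1) + lam (m+2))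

/-- The candidate vertex. -/
noncomputable def Xw (m : ℕ) (lam : ℕ → ℝ) : TPt (m+2) :=
  (fun p => if p.1.2 = m+2 ∨ p.1.1 = m+1 then 0 else lam p.1.2,
   fun p => lam (p.1.2 + 1),
   fun p => if p.1 = 1 then tM m lam else if p.1 = m then lam (m+1) else 0,
   fun p => if p.1 = 1 then tM m lam else 0,
   0)

lemma tY_one (n : ℕ) (lam : ℕ → ℝ) (w : TPt n) (j : ℕ) (h1 : 1 ≤ j) (h2 : j ≤ n) :
    tY n lam w 1 j = lam j := by
  unfold tY; rw [if_pos ⟨rfl, h1, h2⟩]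

lemma tY_coord (n : ℕ) (lam : ℕ → ℝ) (w : TPt n) (i j : ℕ)
    (h : 2 ≤ i ∧ i ≤ j ∧ j ≤ n) : tY n lam w i j = w.1 ⟨(i, j), h⟩ := by
  unfold tY
  rw [if_neg (by rintro ⟨rfl, -⟩; omega), dif_pos h]

lemma tZ_coord (n : ℕ) (w : TPt n) (i j : ℕ) (h : 1 ≤ i ∧ i ≤ j ∧ j ≤ n - 2) :
    tZ n w i j = w.2.1 ⟨(i, j), h⟩ := dif_pos h

lemma tU_coord (n : ℕ) (w : TPt n) (i : ℕ) (h : 1 ≤ i ∧ i ≤ n - 2) :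
    tU n w i = w.2.2.1 ⟨i, h⟩ := dif_pos h

lemma tD_coord (n : ℕ) (w : TPt n) (i : ℕ) (h : 1 ≤ i ∧ i ≤ n - 2) :
    tD n w i = w.2.2.2.1 ⟨i, h⟩ := dif_pos h

section Mix

variable {n : ℕ} {lam : ℕ → ℝ} {a b : ℝ} (w₁ w₂ : TPt n)

lemma mixY (hab : a + b = 1) (i j : ℕ) :
    tY n lam (a • w₁ + b • w₂) i j = a * tY n lam w₁ i j + b * tY n lam w₂ i j := by
  unfold tY
  split_ifs with h1 h2
  · rw [← add_mul, hab, one_mul]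
  · rfl
  · ring

lemma mixZ (i j : ℕ) :
    tZ n (a • w₁ + b • w₂) i j = a * tZ n w₁ i j + b * tZ n w₂ i j := by
  unfold tZ; split_ifs with h
  · rfl
  · ring

lemma mixU (i : ℕ) :
    tU n (a • w₁ + b • w₂) i = a * tU n w₁ i + b * tU n w₂ i := by
  unfold tU; split_ifs with h
  · rfl
  · ring

lemma mixD (i : ℕ) :
    tD n (a • w₁ + b • w₂) i = a * tD n w₁ i + b * tD n w₂ i := by
  unfold tD; split_ifs with h
  · rfl
  · ring

lemma mixL : tL n (a • w₁ + b • w₂) = a * tL n w₁ + b * tL n w₂ := rfl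

end Mix

lemma pinpair {a b p₁ q₁ p₂ q₂ : ℝ} (ha : 0 < a) (hb : 0 < b)
    (h₁ : p₁ ≤ q₁) (h₂ : p₂ ≤ q₂) (h : a * p₁ + b * p₂ = a * q₁ + b * q₂) :
    p₁ = q₁ ∧ p₂ = q₂ := by
  have key : a * (q₁ - p₁) + b * (q₂ - p₂) = 0 := by linear_combination -h
  have k1 : a * (q₁ - p₁) = 0 :=
    le_antisymm (by nlinarith [mul_nonneg hb.le (sub_nonneg.2 h₂)])
      (mul_nonneg ha.le (sub_nonneg.2 h₁))
  have k2 : b * (q₂ - p₂) = 0 := by linarith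
  constructor
  · have := (mul_eq_zero.mp k1).resolve_left ha.ne'
    linarith
  · have := (mul_eq_zero.mp k2).resolve_left hb.ne'
    linarith

lemma pin2 {a b p₁ p₂ c : ℝ} (ha : 0 < a) (hb : 0 < b) (hab : a + b = 1)
    (h₁ : p₁ ≤ c) (h₂ : p₂ ≤ c) (h : a * p₁ + b * p₂ = c) : p₁ = c ∧ p₂ = c := by
  have key : a * (c - p₁) + b * (c - p₂) = 0 := by linear_combination c * hab - h
  have k1 : a * (c - p₁) = 0 :=
    le_antisymm (by nlinarith [mul_nonneg hb.le (sub_nonneg.2 h₂)])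
      (mul_nonneg ha.le (sub_nonneg.2 h₁))
  have k2 : b * (c - p₂) = 0 := by linarith
  constructor
  · have := (mul_eq_zero.mp k1).resolve_left ha.ne'
    linarith
  · have := (mul_eq_zero.mp k2).resolve_left hb.ne'
    linarith

section Values

variable (m : ℕ) (lam : ℕ → ℝ)

lemma XYtop (j : ℕ) (h1 : 1 ≤ j) (h2 : j ≤ m+2) :
    tY (m+2) lam (Xw m lam) 1 j = lam j := tY_one _ _ _ _ h1 h2

lemma XYa (i j : ℕ) (h2 : 2 ≤ i) (hij : i ≤ j) (hj : j ≤ m+1) (hi : i ≠ m+1) :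
    tY (m+2) lam (Xw m lam) i j = lam j := by
  rw [tY_coord _ _ _ _ _ ⟨h2, hij, by omega⟩]
  show (if j = m+2 ∨ i = m+1 then (0:ℝ) else lam j) = lam j
  rw [if_neg (by omega)]

lemma XYgen (i j : ℕ) (h1 : 1 ≤ i) (hij : i ≤ j) (hj : j ≤ m+1) (hi : i ≠ m+1) :
    tY (m+2) lam (Xw m lam) i j = lam j := by
  rcases Nat.eq_or_lt_of_le h1 with h | h
  · exact h ▸ XYtop m lam j (by omega) (by omega)
  · exact XYa m lam i j (by omega) hij hj hi

lemma XY0 (i j : ℕ) (h2 : 2 ≤ i) (hij : i ≤ j) (hj : j ≤ m+2)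
    (hor : j = m+2 ∨ i = m+1) : tY (m+2) lam (Xw m lam) i j = 0 := by
  rw [tY_coord _ _ _ _ _ ⟨h2, hij, hj⟩]
  show (if j = m+2 ∨ i = m+1 then (0:ℝ) else lam j) = 0
  rw [if_pos hor]

lemma XZval (i j : ℕ) (h1 : 1 ≤ i) (hij : i ≤ j) (hj : j ≤ m) :
    tZ (m+2) (Xw m lam) i j = lam (j+1) :=
  tZ_coord _ _ _ _ ⟨h1, hij, hj⟩

lemma XUval1 (hm : 1 ≤ m) : tU (m+2) (Xw m lam) 1 = tM m lam := by
  rw [tU_coord (m+2) (Xw m lam) 1 ⟨le_rfl, hm⟩]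
  simp [Xw]

lemma XUvalm (hm : 2 ≤ m) : tU (m+2) (Xw m lam) m = lam (m+1) := by
  rw [tU_coord (m+2) (Xw m lam) m ⟨by omega, by omega⟩]
  simp [Xw, show ¬(m = 1) by omega]

lemma XUval0 (i : ℕ) (h2 : 2 ≤ i) (hi : i + 1 ≤ m) : tU (m+2) (Xw m lam) i = 0 := by
  rw [tU_coord (m+2) (Xw m lam) i ⟨by omega, by omega⟩]
  simp [Xw, show ¬(i = 1) by omega, show ¬(i = m) by omega]

lemma XDval1 (hm : 1 ≤ m) : tD (m+2) (Xw m lam) 1 = tM m lam := by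
  rw [tD_coord (m+2) (Xw m lam) 1 ⟨le_rfl, hm⟩]
  simp [Xw]

lemma XDval0 (i : ℕ) (h2 : 2 ≤ i) (hi : i ≤ m) : tD (m+2) (Xw m lam) i = 0 := by
  rw [tD_coord (m+2) (Xw m lam) i ⟨by omega, by omega⟩]
  simp [Xw, show ¬(i = 1) by omega]

lemma XLval : tL (m+2) (Xw m lam) = 0 := rfl

end Values

section Main

variable {m : ℕ} {lam : ℕ → ℝ}

lemma XwMem (hm : 2 ≤ m)
    (hmono : ∀ j, 1 ≤ j → j + 1 ≤ m + 1 → lam (j + 1) ≤ lam j)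
    (habs : |lam (m+2)| ≤ lam (m+1)) :
    Xw m lam ∈ tGT (m+2) lam := by
  have hpos : 0 ≤ lam (m+1) := le_trans (abs_nonneg _) habs
  have hle : lam (m+2) ≤ lam (m+1) := le_trans (le_abs_self _) habs
  have hge : -lam (m+1) ≤ lam (m+2) := by
    have := neg_abs_le (lam (m+2)); linarith
  have hM1 : tM m lam ≤ lam (m+1) := min_le_left _ _
  have hM2 : tM m lam ≤ lam (m+1) + lam (m+2) := min_le_right _ _
  have hM0 : 0 ≤ tM m lam := le_min hpos (by linarith)
  have hMt : lam (m+2) ≤ tM m lam := le_min hle (by linarith)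
  constructor
  · -- Vlam
    intro i h1 h2
    simp only [show m+2-2 = m from rfl, show m+2-1 = m+1 from rfl] at h2 ⊢
    rcases (by omega : i = 1 ∨ (2 ≤ i ∧ i + 1 ≤ m) ∨ i = m) with rfl | ⟨hi2, hi3⟩ | him
    · rw [XUval1 m lam (by omega), XDval1 m lam (by omega),
        XYtop m lam (m+1) (by omega) (by omega),
        XYa m lam 2 (m+1) le_rfl (by omega) le_rfl (by omega)]
      ring
    · rw [XUval0 m lam i hi2 hi3, XDval0 m lam i hi2 (by omega),
        XYa m lam i (m+1) (by omega) (by omega) le_rfl (by omega),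
        XYa m lam (i+1) (m+1) (by omega) (by omega) le_rfl (by omega)]
      ring
    · rw [him, XUvalm m lam hm, XDval0 m lam m hm le_rfl,
        XYa m lam m (m+1) hm (by omega) le_rfl (by omega),
        XY0 m lam (m+1) (m+1) (by omega) le_rfl (by omega) (Or.inr rfl)]
  refine ⟨?_, ?_, ?_, ?_, ?_⟩
  · -- family 1
    intro i j h1 h2 h3 h4
    simp only [show m+2-2 = m from rfl] at h2 h4
    rw [XYgen m lam i j h1 h3 (by omega) (by omega), XZval m lam i j h1 h3 h4,
      XYgen m lam i (j+1) h1 (by omega) (by omega) (by omega)]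
    exact ⟨hmono j (by omega) (by omega), le_rfl⟩
  · -- family 2
    intro i j h1 h2 h3 h4
    simp only [show m+2-2 = m from rfl] at h2 h4
    have hj1 : j - 1 + 1 = j := by omega
    rw [XZval m lam i (j-1) h1 (by omega) (by omega), hj1,
      XYgen m lam (i+1) j (by omega) h3 (by omega) (by omega),
      XZval m lam i j h1 (by omega) h4]
    exact ⟨le_rfl, hmono j (by omega) (by omega)⟩
  · -- family 3
    intro i h1 h2
    simp only [show m+2-2 = m from rfl, show m+2-1 = m+1 from rfl] at h2 ⊢
    rw [XZval m lam i m h1 h2 le_rfl]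
    rcases (by omega : i = m ∨ i + 1 ≤ m) with him | hi
    · rw [him, XY0 m lam (m+1) (m+1) (by omega) le_rfl (by omega) (Or.inr rfl)]
      exact hpos
    · rw [XYa m lam (i+1) (m+1) (by omega) (by omega) le_rfl (by omega)]
  · -- U/D block
    intro i h1 h2
    simp only [show m+2-2 = m from rfl, show m+2-1 = m+1 from rfl] at h2 ⊢
    rcases (by omega : i = 1 ∨ (2 ≤ i ∧ i + 1 ≤ m) ∨ i = m) with rfl | ⟨hi2, hi3⟩ | him
    · rw [XUval1 m lam (by omega), XDval1 m lam (by omega),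
        XYtop m lam (m+1) (by omega) (by omega),
        XYtop m lam (m+2) (by omega) (by omega),
        XYa m lam 2 (m+1) le_rfl (by omega) le_rfl (by omega),
        XY0 m lam 2 (m+2) le_rfl (by omega) le_rfl (Or.inl rfl)]
      refine ⟨hM1, max_le hMt hM0, by linarith, hM1, max_le hMt hM0, by linarith⟩
    · rw [XUval0 m lam i hi2 hi3, XDval0 m lam i hi2 (by omega),
        XYa m lam i (m+1) (by omega) (by omega) le_rfl (by omega),
        XYa m lam (i+1) (m+1) (by omega) (by omega) le_rfl (by omega),
        XY0 m lam i (m+2) hi2 (by omega) le_rfl (Or.inl rfl),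
        XY0 m lam (i+1) (m+2) (by omega) (by omega) le_rfl (Or.inl rfl)]
      refine ⟨hpos, by simp, by linarith, hpos, by simp, by linarith⟩
    · rw [him, XUvalm m lam hm, XDval0 m lam m hm le_rfl,
        XYa m lam m (m+1) hm (by omega) le_rfl (by omega),
        XY0 m lam (m+1) (m+1) (by omega) le_rfl (by omega) (Or.inr rfl),
        XY0 m lam m (m+2) hm (by omega) le_rfl (Or.inl rfl),
        XY0 m lam (m+1) (m+2) (by omega) (by omega) le_rfl (Or.inl rfl)]
      refine ⟨le_rfl, by simpa using hpos, by linarith, le_rfl, by simp, by linarith⟩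
  · -- L block
    simp only [show m+2-2 = m from rfl, show m+2-1 = m+1 from rfl]
    rw [XY0 m lam (m+1) (m+1) (by omega) le_rfl (by omega) (Or.inr rfl),
      XY0 m lam (m+1) (m+2) (by omega) (by omega) le_rfl (Or.inl rfl),
      XY0 m lam (m+2) (m+2) (by omega) le_rfl le_rfl (Or.inl rfl), XLval]
    refine ⟨le_rfl, by simp, by linarith⟩

end Main


section Rigid

variable {m : ℕ} {lam : ℕ → ℝ}

lemma tail0 (hm : 2 ≤ m) (w : TPt (m+2))
    (TDh : ∀ i, 2 ≤ i → i + 1 ≤ m →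
      tU (m+2) w i = tY (m+2) lam w i (m+2) ∧ tU (m+2) w i = tY (m+2) lam w (i+1) (m+2))
    (TE1 : tD (m+2) w m = tY (m+2) lam w m (m+2))
    (TE2 : tD (m+2) w m = tY (m+2) lam w (m+1) (m+2))
    (TE3 : tD (m+2) w m = tY (m+2) lam w (m+1) (m+1))
    (TE4 : tD (m+2) w m = tY (m+2) lam w (m+1) (m+1) + tY (m+2) lam w m (m+2)
        + tY (m+2) lam w (m+1) (m+2)) :
    (∀ i, 2 ≤ i → i ≤ m → tY (m+2) lam w i (m+2) = 0) ∧ tD (m+2) w m = 0 ∧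
      tY (m+2) lam w (m+1) (m+2) = 0 ∧ tY (m+2) lam w (m+1) (m+1) = 0 := by
  have hD0 : tD (m+2) w m = 0 := by linarith
  have hym : tY (m+2) lam w m (m+2) = 0 := by linarith
  have key : ∀ i, 2 ≤ i → i ≤ m → tY (m+2) lam w i (m+2) = tY (m+2) lam w 2 (m+2) := by
    intro i h2 him
    induction i, h2 using Nat.le_induction with
    | base => rfl
    | succ i hi IH =>
      obtain ⟨d1, d2⟩ := TDh i hi (by omega)
      rw [← d2, d1, IH (by omega)]
  have h2' : tY (m+2) lam w 2 (m+2) = 0 := by rw [← key m hm le_rfl]; exact hym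
  exact ⟨fun i h2 him => (key i h2 him).trans h2', hD0, by linarith, by linarith⟩

lemma rigid (hm : 2 ≤ m) (w : TPt (m+2)) (hw : w ∈ tGT (m+2) lam)
    (TAh : ∀ i j, 1 ≤ i → i ≤ m → i ≤ j → j ≤ m →
      tZ (m+2) w i j = tY (m+2) lam w i (j+1))
    (TBh : ∀ i j, 1 ≤ i → i ≤ m → i + 1 ≤ j → j ≤ m →
      tZ (m+2) w i (j-1) = tY (m+2) lam w (i+1) j)
    (TCh : ∀ i, 1 ≤ i → i + 1 ≤ m → tZ (m+2) w i m = tY (m+2) lam w (i+1) (m+1))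
    (TDh : ∀ i, 2 ≤ i → i + 1 ≤ m →
      tU (m+2) w i = tY (m+2) lam w i (m+2) ∧ tU (m+2) w i = tY (m+2) lam w (i+1) (m+2))
    (TE1 : tD (m+2) w m = tY (m+2) lam w m (m+2))
    (TE2 : tD (m+2) w m = tY (m+2) lam w (m+1) (m+2))
    (TE3 : tD (m+2) w m = tY (m+2) lam w (m+1) (m+1))
    (TE4 : tD (m+2) w m = tY (m+2) lam w (m+1) (m+1) + tY (m+2) lam w m (m+2)
        + tY (m+2) lam w (m+1) (m+2))
    (TFh : tU (m+2) w m = tY (m+2) lam w m (m+1))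
    (TG1 : tL (m+2) w = tY (m+2) lam w (m+1) (m+1))
    (TG2 : tY (m+2) lam w (m+1) (m+2) = tL (m+2) w)
    (TG3 : tY (m+2) lam w (m+2) (m+2) = tL (m+2) w)
    (THh : tU (m+2) w 1 = tM m lam) : w = Xw m lam := by
  obtain ⟨tail1, tail2, tail3, tail4⟩ := tail0 hm w TDh TE1 TE2 TE3 TE4
  have claim1 : ∀ i, 1 ≤ i → i ≤ m → ∀ j, i ≤ j → j ≤ m+1 →
      tY (m+2) lam w i j = lam j := by
    intro i h1
    induction i, h1 using Nat.le_induction with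
    | base => exact fun _ j hj hj2 => tY_one _ _ _ _ (by omega) (by omega)
    | succ i hi IH =>
      intro him1 j hij hj
      have him : i ≤ m := by omega
      rcases (by omega : j ≤ m ∨ j = m+1) with hjm | rfl
      · have hb := TBh i j hi him (by omega) hjm
        have ha := TAh i (j-1) hi him (by omega) (by omega)
        rw [show j - 1 + 1 = j from by omega] at ha
        rw [← hb, ha, IH him j (by omega) (by omega)]
      · have hc := TCh i hi (by omega)
        have ha := TAh i m hi him (by omega) le_rfl
        rw [← hc, ha, IH him (m+1) (by omega) le_rfl]
  have claim2 : ∀ i j, 1 ≤ i → i ≤ j → j ≤ m → tZ (m+2) w i j = lam (j+1) := by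
    intro i j h1 hij hj
    rw [TAh i j h1 (by omega) hij hj, claim1 i h1 (by omega) (j+1) (by omega) (by omega)]
  have hU2 : ∀ i, 2 ≤ i → i + 1 ≤ m → tU (m+2) w i = 0 := fun i h2 h3 =>
    (TDh i h2 h3).1.trans (tail1 i h2 (by omega))
  have hUm : tU (m+2) w m = lam (m+1) :=
    TFh.trans (claim1 m (by omega) le_rfl (m+1) (by omega) le_rfl)
  have hL0 : tL (m+2) w = 0 := TG1.trans tail4
  have hYnn : tY (m+2) lam w (m+2) (m+2) = 0 := TG3.trans hL0
  have hV : ∀ i, 1 ≤ i → i ≤ m →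
      tU (m+2) w i - tD (m+2) w i
        = tY (m+2) lam w i (m+1) - tY (m+2) lam w (i+1) (m+1) := hw.1
  refine Prod.ext ?_ (Prod.ext ?_ (Prod.ext ?_ (Prod.ext ?_ ?_)))
  · funext p
    obtain ⟨⟨i, j⟩, hp⟩ := p
    have hp' : 2 ≤ i ∧ i ≤ j ∧ j ≤ m+2 := hp
    rw [← tY_coord (m+2) lam w i j hp]
    show tY (m+2) lam w i j = if j = m+2 ∨ i = m+1 then 0 else lam j
    split_ifs with h
    · rcases h with rfl | rfl
      · rcases (by omega : i ≤ m ∨ i = m+1 ∨ i = m+2) with h' | h' | h'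
        · exact tail1 i hp'.1 h'
        · rw [h']; exact tail3
        · rw [h']; exact hYnn
      · rcases (by omega : j = m+1 ∨ j = m+2) with h' | h'
        · rw [h']; exact tail4
        · rw [h']; exact tail3
    · have hj : j ≠ m+2 := fun hh => h (Or.inl hh)
      have hi : i ≠ m+1 := fun hh => h (Or.inr hh)
      exact claim1 i (by omega) (by omega) j hp'.2.1 (by omega)
  · funext p
    obtain ⟨⟨i, j⟩, hp⟩ := p
    have hp' : 1 ≤ i ∧ i ≤ j ∧ j ≤ m := hp
    rw [← tZ_coord (m+2) w i j hp]
    show tZ (m+2) w i j = lam (j+1)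
    exact claim2 i j hp'.1 hp'.2.1 hp'.2.2
  · funext p
    obtain ⟨i, hp⟩ := p
    have hp' : 1 ≤ i ∧ i ≤ m := hp
    rw [← tU_coord (m+2) w i hp]
    show tU (m+2) w i = if i = 1 then tM m lam else if i = m then lam (m+1) else 0
    split_ifs with e1 e2
    · rw [e1]; exact THh
    · rw [e2]; exact hUm
    · exact hU2 i (by omega) (by omega)
  · funext p
    obtain ⟨i, hp⟩ := p
    have hp' : 1 ≤ i ∧ i ≤ m := hp
    rw [← tD_coord (m+2) w i hp]
    show tD (m+2) w i = if i = 1 then tM m lam else 0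
    have hv := hV i hp'.1 hp'.2
    split_ifs with e1
    · rw [e1] at hv ⊢
      rw [tY_one (m+2) lam w (m+1) (by omega) (by omega),
        claim1 2 (by omega) hm (m+1) (by omega) le_rfl, THh] at hv
      linarith
    · rcases (by omega : i + 1 ≤ m ∨ i = m) with h' | him
      · rw [claim1 i (by omega) (by omega) (m+1) (by omega) le_rfl,
          claim1 (i+1) (by omega) (by omega) (m+1) (by omega) le_rfl,
          hU2 i (by omega) h'] at hv
        linarith
      · rw [him] at hv ⊢
        rw [claim1 m (by omega) le_rfl (m+1) (by omega) le_rfl, tail4, hUm] at hv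
        linarith
  · exact hL0

lemma Xext (hm : 2 ≤ m)
    (hmono : ∀ j, 1 ≤ j → j + 1 ≤ m + 1 → lam (j + 1) ≤ lam j)
    (habs : |lam (m+2)| ≤ lam (m+1)) :
    Xw m lam ∈ (tGT (m+2) lam).extremePoints ℝ := by
  refine ⟨XwMem hm hmono habs, ?_⟩
  intro x₁ h₁ x₂ h₂ hseg
  obtain ⟨a, b, ha, hb, hab, hsum⟩ := hseg
  obtain ⟨V₁, F1₁, F2₁, F3₁, UD₁, L₁⟩ := h₁
  obtain ⟨V₂, F1₂, F2₂, F3₂, UD₂, L₂⟩ := h₂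
  have keyA : ∀ i j, 1 ≤ i → i ≤ m → i ≤ j → j ≤ m →
      tZ (m+2) x₁ i j = tY (m+2) lam x₁ i (j+1) ∧
      tZ (m+2) x₂ i j = tY (m+2) lam x₂ i (j+1) := by
    intro i j h1 h2 h3 h4
    have e₁ : tY (m+2) lam x₁ i (j+1) ≤ tZ (m+2) x₁ i j :=
      (F1₁ i j h1 (by omega) h3 (by omega)).2
    have e₂ : tY (m+2) lam x₂ i (j+1) ≤ tZ (m+2) x₂ i j :=
      (F1₂ i j h1 (by omega) h3 (by omega)).2
    have hmix : a * tY (m+2) lam x₁ i (j+1) + b * tY (m+2) lam x₂ i (j+1)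
        = a * tZ (m+2) x₁ i j + b * tZ (m+2) x₂ i j := by
      rw [← mixY x₁ x₂ hab i (j+1), ← mixZ (a := a) (b := b) x₁ x₂ i j, hsum,
        XYgen m lam i (j+1) h1 (by omega) (by omega) (by omega),
        XZval m lam i j h1 h3 h4]
    obtain ⟨r₁, r₂⟩ := pinpair ha hb e₁ e₂ hmix
    exact ⟨r₁.symm, r₂.symm⟩
  have keyB : ∀ i j, 1 ≤ i → i ≤ m → i + 1 ≤ j → j ≤ m →
      tZ (m+2) x₁ i (j-1) = tY (m+2) lam x₁ (i+1) j ∧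
      tZ (m+2) x₂ i (j-1) = tY (m+2) lam x₂ (i+1) j := by
    intro i j h1 h2 h3 h4
    have e₁ : tY (m+2) lam x₁ (i+1) j ≤ tZ (m+2) x₁ i (j-1) :=
      (F2₁ i j h1 (by omega) h3 (by omega)).1
    have e₂ : tY (m+2) lam x₂ (i+1) j ≤ tZ (m+2) x₂ i (j-1) :=
      (F2₂ i j h1 (by omega) h3 (by omega)).1
    have hmix : a * tY (m+2) lam x₁ (i+1) j + b * tY (m+2) lam x₂ (i+1) j
        = a * tZ (m+2) x₁ i (j-1) + b * tZ (m+2) x₂ i (j-1) := by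
      rw [← mixY x₁ x₂ hab (i+1) j, ← mixZ (a := a) (b := b) x₁ x₂ i (j-1), hsum,
        XYgen m lam (i+1) j (by omega) h3 (by omega) (by omega),
        XZval m lam i (j-1) h1 (by omega) (by omega),
        show j - 1 + 1 = j from by omega]
    obtain ⟨r₁, r₂⟩ := pinpair ha hb e₁ e₂ hmix
    exact ⟨r₁.symm, r₂.symm⟩
  have keyC : ∀ i, 1 ≤ i → i + 1 ≤ m →
      tZ (m+2) x₁ i m = tY (m+2) lam x₁ (i+1) (m+1) ∧
      tZ (m+2) x₂ i m = tY (m+2) lam x₂ (i+1) (m+1) := by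
    intro i h1 h2
    have e₁ : tY (m+2) lam x₁ (i+1) (m+1) ≤ tZ (m+2) x₁ i m := F3₁ i h1 (by omega)
    have e₂ : tY (m+2) lam x₂ (i+1) (m+1) ≤ tZ (m+2) x₂ i m := F3₂ i h1 (by omega)
    have hmix : a * tY (m+2) lam x₁ (i+1) (m+1) + b * tY (m+2) lam x₂ (i+1) (m+1)
        = a * tZ (m+2) x₁ i m + b * tZ (m+2) x₂ i m := by
      rw [← mixY x₁ x₂ hab (i+1) (m+1), ← mixZ (a := a) (b := b) x₁ x₂ i m, hsum,
        XYgen m lam (i+1) (m+1) (by omega) (by omega) le_rfl (by omega),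
        XZval m lam i m h1 (by omega) le_rfl]
    obtain ⟨r₁, r₂⟩ := pinpair ha hb e₁ e₂ hmix
    exact ⟨r₁.symm, r₂.symm⟩
  have keyD : ∀ i, 2 ≤ i → i + 1 ≤ m →
      (tU (m+2) x₁ i = tY (m+2) lam x₁ i (m+2) ∧
        tU (m+2) x₁ i = tY (m+2) lam x₁ (i+1) (m+2)) ∧
      (tU (m+2) x₂ i = tY (m+2) lam x₂ i (m+2) ∧
        tU (m+2) x₂ i = tY (m+2) lam x₂ (i+1) (m+2)) := by
    intro i h2 h3
    have e₁ : tY (m+2) lam x₁ i (m+2) ≤ tU (m+2) x₁ i :=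
      le_trans (le_max_left _ _) (UD₁ i (by omega) (by omega)).2.1
    have e₂ : tY (m+2) lam x₂ i (m+2) ≤ tU (m+2) x₂ i :=
      le_trans (le_max_left _ _) (UD₂ i (by omega) (by omega)).2.1
    have f₁ : tY (m+2) lam x₁ (i+1) (m+2) ≤ tU (m+2) x₁ i :=
      le_trans (le_max_right _ _) (UD₁ i (by omega) (by omega)).2.1
    have f₂ : tY (m+2) lam x₂ (i+1) (m+2) ≤ tU (m+2) x₂ i :=
      le_trans (le_max_right _ _) (UD₂ i (by omega) (by omega)).2.1
    have hmix1 : a * tY (m+2) lam x₁ i (m+2) + b * tY (m+2) lam x₂ i (m+2)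
        = a * tU (m+2) x₁ i + b * tU (m+2) x₂ i := by
      rw [← mixY x₁ x₂ hab i (m+2), ← mixU (a := a) (b := b) x₁ x₂ i, hsum,
        XY0 m lam i (m+2) h2 (by omega) le_rfl (Or.inl rfl), XUval0 m lam i h2 h3]
    have hmix2 : a * tY (m+2) lam x₁ (i+1) (m+2) + b * tY (m+2) lam x₂ (i+1) (m+2)
        = a * tU (m+2) x₁ i + b * tU (m+2) x₂ i := by
      rw [← mixY x₁ x₂ hab (i+1) (m+2), ← mixU (a := a) (b := b) x₁ x₂ i, hsum,
        XY0 m lam (i+1) (m+2) (by omega) (by omega) le_rfl (Or.inl rfl),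
        XUval0 m lam i h2 h3]
    obtain ⟨r₁, r₂⟩ := pinpair ha hb e₁ e₂ hmix1
    obtain ⟨s₁, s₂⟩ := pinpair ha hb f₁ f₂ hmix2
    exact ⟨⟨r₁.symm, s₁.symm⟩, ⟨r₂.symm, s₂.symm⟩⟩
  -- E-block pins (i = m)
  have zD : a * tD (m+2) x₁ m + b * tD (m+2) x₂ m = 0 := by
    rw [← mixD (a := a) (b := b) x₁ x₂ m, hsum, XDval0 m lam m hm le_rfl]
  have zY1 : a * tY (m+2) lam x₁ m (m+2) + b * tY (m+2) lam x₂ m (m+2) = 0 := by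
    rw [← mixY x₁ x₂ hab m (m+2), hsum, XY0 m lam m (m+2) hm (by omega) le_rfl (Or.inl rfl)]
  have zY2 : a * tY (m+2) lam x₁ (m+1) (m+2) + b * tY (m+2) lam x₂ (m+1) (m+2) = 0 := by
    rw [← mixY x₁ x₂ hab (m+1) (m+2), hsum,
      XY0 m lam (m+1) (m+2) (by omega) (by omega) le_rfl (Or.inl rfl)]
  have zY3 : a * tY (m+2) lam x₁ (m+1) (m+1) + b * tY (m+2) lam x₂ (m+1) (m+1) = 0 := by
    rw [← mixY x₁ x₂ hab (m+1) (m+1), hsum,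
      XY0 m lam (m+1) (m+1) (by omega) le_rfl (by omega) (Or.inr rfl)]
  have zY4 : a * tY (m+2) lam x₁ (m+2) (m+2) + b * tY (m+2) lam x₂ (m+2) (m+2) = 0 := by
    rw [← mixY x₁ x₂ hab (m+2) (m+2), hsum,
      XY0 m lam (m+2) (m+2) (by omega) le_rfl le_rfl (Or.inl rfl)]
  have zL : a * tL (m+2) x₁ + b * tL (m+2) x₂ = 0 := by
    rw [← mixL (a := a) (b := b) x₁ x₂, hsum, XLval]
  have keyE1 : tD (m+2) x₁ m = tY (m+2) lam x₁ m (m+2) ∧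
      tD (m+2) x₂ m = tY (m+2) lam x₂ m (m+2) := by
    have e₁ : tY (m+2) lam x₁ m (m+2) ≤ tD (m+2) x₁ m :=
      le_trans (le_max_left _ _) (UD₁ m (by omega) (by omega)).2.2.2.2.1
    have e₂ : tY (m+2) lam x₂ m (m+2) ≤ tD (m+2) x₂ m :=
      le_trans (le_max_left _ _) (UD₂ m (by omega) (by omega)).2.2.2.2.1
    have hmix : a * tY (m+2) lam x₁ m (m+2) + b * tY (m+2) lam x₂ m (m+2)
        = a * tD (m+2) x₁ m + b * tD (m+2) x₂ m := by rw [zD, zY1]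
    obtain ⟨r₁, r₂⟩ := pinpair ha hb e₁ e₂ hmix
    exact ⟨r₁.symm, r₂.symm⟩
  have keyE2 : tD (m+2) x₁ m = tY (m+2) lam x₁ (m+1) (m+2) ∧
      tD (m+2) x₂ m = tY (m+2) lam x₂ (m+1) (m+2) := by
    have e₁ : tY (m+2) lam x₁ (m+1) (m+2) ≤ tD (m+2) x₁ m :=
      le_trans (le_max_right _ _) (UD₁ m (by omega) (by omega)).2.2.2.2.1
    have e₂ : tY (m+2) lam x₂ (m+1) (m+2) ≤ tD (m+2) x₂ m :=
      le_trans (le_max_right _ _) (UD₂ m (by omega) (by omega)).2.2.2.2.1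
    have hmix : a * tY (m+2) lam x₁ (m+1) (m+2) + b * tY (m+2) lam x₂ (m+1) (m+2)
        = a * tD (m+2) x₁ m + b * tD (m+2) x₂ m := by rw [zD, zY2]
    obtain ⟨r₁, r₂⟩ := pinpair ha hb e₁ e₂ hmix
    exact ⟨r₁.symm, r₂.symm⟩
  have keyE3 : tD (m+2) x₁ m = tY (m+2) lam x₁ (m+1) (m+1) ∧
      tD (m+2) x₂ m = tY (m+2) lam x₂ (m+1) (m+1) := by
    have e₁ : tD (m+2) x₁ m ≤ tY (m+2) lam x₁ (m+1) (m+1) :=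
      (UD₁ m (by omega) (by omega)).2.2.2.1
    have e₂ : tD (m+2) x₂ m ≤ tY (m+2) lam x₂ (m+1) (m+1) :=
      (UD₂ m (by omega) (by omega)).2.2.2.1
    have hmix : a * tD (m+2) x₁ m + b * tD (m+2) x₂ m
        = a * tY (m+2) lam x₁ (m+1) (m+1) + b * tY (m+2) lam x₂ (m+1) (m+1) := by
      rw [zD, zY3]
    exact pinpair ha hb e₁ e₂ hmix
  have keyE4 : (tD (m+2) x₁ m = tY (m+2) lam x₁ (m+1) (m+1) + tY (m+2) lam x₁ m (m+2)
        + tY (m+2) lam x₁ (m+1) (m+2)) ∧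
      (tD (m+2) x₂ m = tY (m+2) lam x₂ (m+1) (m+1) + tY (m+2) lam x₂ m (m+2)
        + tY (m+2) lam x₂ (m+1) (m+2)) := by
    have e₁ : tD (m+2) x₁ m ≤ tY (m+2) lam x₁ (m+1) (m+1) + tY (m+2) lam x₁ m (m+2)
        + tY (m+2) lam x₁ (m+1) (m+2) := (UD₁ m (by omega) (by omega)).2.2.2.2.2
    have e₂ : tD (m+2) x₂ m ≤ tY (m+2) lam x₂ (m+1) (m+1) + tY (m+2) lam x₂ m (m+2)
        + tY (m+2) lam x₂ (m+1) (m+2) := (UD₂ m (by omega) (by omega)).2.2.2.2.2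
    have hmix : a * tD (m+2) x₁ m + b * tD (m+2) x₂ m
        = a * (tY (m+2) lam x₁ (m+1) (m+1) + tY (m+2) lam x₁ m (m+2)
            + tY (m+2) lam x₁ (m+1) (m+2))
          + b * (tY (m+2) lam x₂ (m+1) (m+1) + tY (m+2) lam x₂ m (m+2)
            + tY (m+2) lam x₂ (m+1) (m+2)) := by
      linear_combination zD - zY1 - zY2 - zY3
    exact pinpair ha hb e₁ e₂ hmix
  have keyF : tU (m+2) x₁ m = tY (m+2) lam x₁ m (m+1) ∧
      tU (m+2) x₂ m = tY (m+2) lam x₂ m (m+1) := by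
    have e₁ : tU (m+2) x₁ m ≤ tY (m+2) lam x₁ m (m+1) := (UD₁ m (by omega) (by omega)).1
    have e₂ : tU (m+2) x₂ m ≤ tY (m+2) lam x₂ m (m+1) := (UD₂ m (by omega) (by omega)).1
    have hmix : a * tU (m+2) x₁ m + b * tU (m+2) x₂ m
        = a * tY (m+2) lam x₁ m (m+1) + b * tY (m+2) lam x₂ m (m+1) := by
      rw [← mixY x₁ x₂ hab m (m+1), ← mixU (a := a) (b := b) x₁ x₂ m, hsum,
        XYa m lam m (m+1) hm (by omega) le_rfl (by omega), XUvalm m lam hm]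
    exact pinpair ha hb e₁ e₂ hmix
  have keyG1 : tL (m+2) x₁ = tY (m+2) lam x₁ (m+1) (m+1) ∧
      tL (m+2) x₂ = tY (m+2) lam x₂ (m+1) (m+1) := by
    have e₁ : tL (m+2) x₁ ≤ tY (m+2) lam x₁ (m+1) (m+1) := L₁.1
    have e₂ : tL (m+2) x₂ ≤ tY (m+2) lam x₂ (m+1) (m+1) := L₂.1
    have hmix : a * tL (m+2) x₁ + b * tL (m+2) x₂
        = a * tY (m+2) lam x₁ (m+1) (m+1) + b * tY (m+2) lam x₂ (m+1) (m+1) := by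
      rw [zL, zY3]
    exact pinpair ha hb e₁ e₂ hmix
  have keyG2 : tY (m+2) lam x₁ (m+1) (m+2) = tL (m+2) x₁ ∧
      tY (m+2) lam x₂ (m+1) (m+2) = tL (m+2) x₂ := by
    have e₁ : tY (m+2) lam x₁ (m+1) (m+2) ≤ tL (m+2) x₁ :=
      le_trans (le_max_left _ _) L₁.2.1
    have e₂ : tY (m+2) lam x₂ (m+1) (m+2) ≤ tL (m+2) x₂ :=
      le_trans (le_max_left _ _) L₂.2.1
    have hmix : a * tY (m+2) lam x₁ (m+1) (m+2) + b * tY (m+2) lam x₂ (m+1) (m+2)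
        = a * tL (m+2) x₁ + b * tL (m+2) x₂ := by rw [zL, zY2]
    exact pinpair ha hb e₁ e₂ hmix
  have keyG3 : tY (m+2) lam x₁ (m+2) (m+2) = tL (m+2) x₁ ∧
      tY (m+2) lam x₂ (m+2) (m+2) = tL (m+2) x₂ := by
    have e₁ : tY (m+2) lam x₁ (m+2) (m+2) ≤ tL (m+2) x₁ :=
      le_trans (le_max_right _ _) L₁.2.1
    have e₂ : tY (m+2) lam x₂ (m+2) (m+2) ≤ tL (m+2) x₂ :=
      le_trans (le_max_right _ _) L₂.2.1
    have hmix : a * tY (m+2) lam x₁ (m+2) (m+2) + b * tY (m+2) lam x₂ (m+2) (m+2)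
        = a * tL (m+2) x₁ + b * tL (m+2) x₂ := by rw [zL, zY4]
    exact pinpair ha hb e₁ e₂ hmix
  -- the u₁ pin
  have tails₁ := tail0 (lam := lam) hm x₁ (fun i h2 h3 => (keyD i h2 h3).1)
    keyE1.1 keyE2.1 keyE3.1 keyE4.1
  have tails₂ := tail0 (lam := lam) hm x₂ (fun i h2 h3 => (keyD i h2 h3).2)
    keyE1.2 keyE2.2 keyE3.2 keyE4.2
  have bound : ∀ (x : TPt (m+2)), x ∈ tGT (m+2) lam → tY (m+2) lam x 2 (m+2) = 0 →
      tU (m+2) x 1 ≤ tM m lam := by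
    intro x hx h20
    have c1 : tU (m+2) x 1 ≤ tY (m+2) lam x 1 (m+1) := (hx.2.2.2.2.1 1 (by omega) (by omega)).1
    have c3 : tU (m+2) x 1 ≤ tY (m+2) lam x 1 (m+1) + tY (m+2) lam x 1 (m+2)
        + tY (m+2) lam x 2 (m+2) := (hx.2.2.2.2.1 1 (by omega) (by omega)).2.2.1
    rw [tY_one (m+2) lam x (m+1) (by omega) (by omega)] at c1 c3
    rw [tY_one (m+2) lam x (m+2) (by omega) (by omega), h20] at c3
    exact le_min c1 (by linarith)
  have bound₁ : tU (m+2) x₁ 1 ≤ tM m lam :=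
    bound x₁ ⟨V₁, F1₁, F2₁, F3₁, UD₁, L₁⟩ (tails₁.1 2 le_rfl hm)
  have bound₂ : tU (m+2) x₂ 1 ≤ tM m lam :=
    bound x₂ ⟨V₂, F1₂, F2₂, F3₂, UD₂, L₂⟩ (tails₂.1 2 le_rfl hm)
  have hMmix : a * tU (m+2) x₁ 1 + b * tU (m+2) x₂ 1 = tM m lam := by
    rw [← mixU (a := a) (b := b) x₁ x₂ 1, hsum, XUval1 m lam (by omega)]
  obtain ⟨TH₁, TH₂⟩ := pin2 ha hb hab bound₁ bound₂ hMmix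
  suffices hboth : x₁ = Xw m lam ∧ x₂ = Xw m lam from hboth.1
  constructor
  · exact rigid hm x₁ ⟨V₁, F1₁, F2₁, F3₁, UD₁, L₁⟩
      (fun i j h1 h2 h3 h4 => (keyA i j h1 h2 h3 h4).1)
      (fun i j h1 h2 h3 h4 => (keyB i j h1 h2 h3 h4).1)
      (fun i h1 h2 => (keyC i h1 h2).1)
      (fun i h2 h3 => (keyD i h2 h3).1)
      keyE1.1 keyE2.1 keyE3.1 keyE4.1 keyF.1 keyG1.1 keyG2.1 keyG3.1 TH₁
  · exact rigid hm x₂ ⟨V₂, F1₂, F2₂, F3₂, UD₂, L₂⟩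
      (fun i j h1 h2 h3 h4 => (keyA i j h1 h2 h3 h4).2)
      (fun i j h1 h2 h3 h4 => (keyB i j h1 h2 h3 h4).2)
      (fun i h1 h2 => (keyC i h1 h2).2)
      (fun i h2 h3 => (keyD i h2 h3).2)
      keyE1.2 keyE2.2 keyE3.2 keyE4.2 keyF.2 keyG1.2 keyG2.2 keyG3.2 TH₂

end Rigid

/-- For `n ≥ 4` and a half-integral weight `λ_1 ≥ … ≥ λ_{n−1} ≥ |λ_n|`, the tweaked
Gelfand–Tsetlin polytope has a vertex one of whose coordinates equals `0` (hence not all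
of its coordinates lie in `½ + ℤ`). -/
theorem statement11 (n : ℕ) (hn : 4 ≤ n) (lam : ℕ → ℝ)
    (hmono : ∀ j, 1 ≤ j → j + 1 ≤ n - 1 → lam (j + 1) ≤ lam j)
    (habs : |lam n| ≤ lam (n - 1))
    (hhalf : ∀ j, 1 ≤ j → j ≤ n → ∃ k : ℤ, lam j = k + 1 / 2) :
    ∃ x ∈ (tGT n lam).extremePoints ℝ,
      (∃ p, x.1 p = 0) ∨ (∃ p, x.2.1 p = 0) ∨ (∃ p, x.2.2.1 p = 0) ∨
      (∃ p, x.2.2.2.1 p = 0) ∨ x.2.2.2.2 = 0 := by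
  obtain ⟨m, rfl⟩ : ∃ m, n = m + 2 := ⟨n - 2, by omega⟩
  have hm : 2 ≤ m := by omega
  exact ⟨Xw m lam, Xext hm (fun j hj hj2 => hmono j hj hj2) habs,
    Or.inr (Or.inr (Or.inr (Or.inr rfl)))⟩
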